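/- Let a, b be positive real numbers with a ≠ b and let q ≥ 0 be a real number. Then ∫₀^π sin^{2q}(ξ) / (a² + b² − 2ab·cos ξ)^{q+1/2} dξ = (2 / (a^{2q} b^{2q})) · ∫₀^{min(a,b)} t^{2q} / (√(a² − t²) · √(b² − t²)) dt. -/

import Mathlib

open Real MeasureTheory Set Filter

noncomputable def copv (a b ξ : ℝ) : ℝ := a^2 + b^2 - 2*a*b*Real.cos ξ
noncomputable def copg (a b ξ : ℝ) : ℝ := a*b*Real.sin ξ / Real.sqrt (copv a b ξ)

section lemmas
variable {a b q : ℝ}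

lemma copv_pos (ha : 0 < a) (hb : 0 < b) (hab : a ≠ b) (ξ : ℝ) : 0 < copv a b ξ := by
  have h1 := Real.cos_le_one ξ
  have hne : a - b ≠ 0 := sub_ne_zero.mpr hab
  have h2 : 0 < (a - b)^2 := by positivity
  have h3 : 0 ≤ 2*a*b*(1 - Real.cos ξ) := by
    have : 0 ≤ 1 - Real.cos ξ := by linarith
    positivity
  unfold copv; nlinarith

lemma rpow_two_q_cont (hq : 0 ≤ q) : Continuous (fun t : ℝ => t ^ (2*q)) := by
  exact Real.continuous_rpow_const (by positivity)

lemma sq_sub_copg_a (ha : 0 < a) (hb : 0 < b) (hab : a ≠ b) (ξ : ℝ) :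
    a^2 - (copg a b ξ)^2 = a^2*(a - b*Real.cos ξ)^2 / copv a b ξ := by
  have hv := copv_pos ha hb hab ξ
  have h1 : Real.sqrt (copv a b ξ) ^ 2 = copv a b ξ := Real.sq_sqrt hv.le
  have h2 := Real.sin_sq_add_cos_sq ξ
  unfold copg
  rw [div_pow, h1]
  field_simp
  unfold copv
  linear_combination (-b^2)*h2

lemma sq_sub_copg_b (ha : 0 < a) (hb : 0 < b) (hab : a ≠ b) (ξ : ℝ) :
    b^2 - (copg a b ξ)^2 = b^2*(b - a*Real.cos ξ)^2 / copv a b ξ := by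
  have hv := copv_pos ha hb hab ξ
  have h1 : Real.sqrt (copv a b ξ) ^ 2 = copv a b ξ := Real.sq_sqrt hv.le
  have h2 := Real.sin_sq_add_cos_sq ξ
  unfold copg
  rw [div_pow, h1]
  field_simp
  unfold copv
  linear_combination (-a^2)*h2

lemma sqrt_sub_copg_a (ha : 0 < a) (hb : 0 < b) (hba : b < a) (ξ : ℝ) :
    Real.sqrt (a^2 - (copg a b ξ)^2)
      = a*(a - b*Real.cos ξ) / Real.sqrt (copv a b ξ) := by
  have hv := copv_pos ha hb hba.ne' ξ
  have hc : b*Real.cos ξ ≤ b := by nlinarith [Real.cos_le_one ξ]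
  have hpos : 0 < a - b*Real.cos ξ := by linarith
  rw [sq_sub_copg_a ha hb hba.ne' ξ,
    show a^2*(a - b*Real.cos ξ)^2 / copv a b ξ = (a*(a - b*Real.cos ξ)/Real.sqrt (copv a b ξ))^2 by
      rw [div_pow, Real.sq_sqrt hv.le]; ring]
  exact Real.sqrt_sq (by positivity)

lemma sqrt_sub_copg_b1 (ha : 0 < a) (hb : 0 < b) (hba : b < a) {ξ : ℝ} (hc : b ≤ a*Real.cos ξ) :
    Real.sqrt (b^2 - (copg a b ξ)^2)
      = b*(a*Real.cos ξ - b) / Real.sqrt (copv a b ξ) := by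
  have hv := copv_pos ha hb hba.ne' ξ
  rw [sq_sub_copg_b ha hb hba.ne' ξ,
    show b^2*(b - a*Real.cos ξ)^2 / copv a b ξ = (b*(a*Real.cos ξ - b)/Real.sqrt (copv a b ξ))^2 by
      rw [div_pow, Real.sq_sqrt hv.le]; ring]
  have h' : 0 ≤ a*Real.cos ξ - b := by linarith
  exact Real.sqrt_sq (by positivity)

lemma sqrt_sub_copg_b2 (ha : 0 < a) (hb : 0 < b) (hba : b < a) {ξ : ℝ} (hc : a*Real.cos ξ ≤ b) :
    Real.sqrt (b^2 - (copg a b ξ)^2)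
      = b*(b - a*Real.cos ξ) / Real.sqrt (copv a b ξ) := by
  have hv := copv_pos ha hb hba.ne' ξ
  rw [sq_sub_copg_b ha hb hba.ne' ξ,
    show b^2*(b - a*Real.cos ξ)^2 / copv a b ξ = (b*(b - a*Real.cos ξ)/Real.sqrt (copv a b ξ))^2 by
      rw [div_pow, Real.sq_sqrt hv.le]; ring]
  have h' : 0 ≤ b - a*Real.cos ξ := by linarith
  exact Real.sqrt_sq (by positivity)

end lemmas

noncomputable def copg' (a b ξ : ℝ) : ℝ :=
  a*b*(Real.cos ξ * copv a b ξ - a*b*Real.sin ξ^2) / (copv a b ξ * Real.sqrt (copv a b ξ))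
noncomputable def copF (a b q ξ : ℝ) : ℝ :=
  Real.sin ξ ^ (2*q) / (a^2 + b^2 - 2*a*b*Real.cos ξ) ^ (q + 1/2)
noncomputable def coph (a b q t : ℝ) : ℝ :=
  t ^ (2*q) / (a ^ (2*q) * b ^ (2*q) * (Real.sqrt (a^2 - t^2) * Real.sqrt (b^2 - t^2)))

section lemmas2
variable {a b q : ℝ}

lemma copg_hasDerivAt (ha : 0 < a) (hb : 0 < b) (hab : a ≠ b) (ξ : ℝ) :
    HasDerivAt (copg a b) (copg' a b ξ) ξ := by
  have hv := copv_pos ha hb hab ξ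
  have hv' : HasDerivAt (copv a b) (2*a*b*Real.sin ξ) ξ := by
    unfold copv
    simpa using ((Real.hasDerivAt_cos ξ).const_mul (2*a*b)).const_sub (a^2+b^2)
  have hs : HasDerivAt (fun ξ => Real.sqrt (copv a b ξ)) ((2*a*b*Real.sin ξ) / (2*Real.sqrt (copv a b ξ))) ξ :=
    (Real.hasDerivAt_sqrt hv.ne').comp ξ hv' |>.congr_deriv (by ring)
  have hnum : HasDerivAt (fun ξ => a*b*Real.sin ξ) (a*b*Real.cos ξ) ξ :=
    (Real.hasDerivAt_sin ξ).const_mul (a*b)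
  have hsq : Real.sqrt (copv a b ξ) ≠ 0 := by positivity
  have := hnum.div hs hsq
  refine this.congr_deriv ?_
  have h1 : Real.sqrt (copv a b ξ) ^ 2 = copv a b ξ := Real.sq_sqrt hv.le
  unfold copg'
  rw [h1]
  field_simp
  ring_nf
  linear_combination (Real.cos ξ) * h1

lemma copg_rpow (ha : 0 < a) (hb : 0 < b) (hba : b < a) (hq : 0 ≤ q) {ξ : ℝ}
    (hs : 0 ≤ Real.sin ξ) :
    (copg a b ξ) ^ (2*q) = a^(2*q)*b^(2*q)*Real.sin ξ^(2*q)/(copv a b ξ)^q := by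
  have hv := copv_pos ha hb hba.ne' ξ
  unfold copg
  rw [Real.div_rpow (by positivity) (Real.sqrt_nonneg _),
    Real.mul_rpow (by positivity) hs, Real.mul_rpow ha.le hb.le,
    Real.sqrt_eq_rpow, ← Real.rpow_mul hv.le, show (1/2:ℝ)*(2*q) = q by ring]

lemma copv_rpow (ha : 0 < a) (hb : 0 < b) (hba : b < a) (ξ : ℝ) :
    (copv a b ξ) ^ (q+1/2) = (copv a b ξ)^q * Real.sqrt (copv a b ξ) := by
  have hv := copv_pos ha hb hba.ne' ξ
  rw [Real.rpow_add hv, ← Real.sqrt_eq_rpow]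

lemma cop_factor (a b ξ : ℝ) :
    Real.cos ξ * copv a b ξ - a*b*Real.sin ξ^2 = (a - b*Real.cos ξ)*(a*Real.cos ξ - b) := by
  unfold copv
  linear_combination (-(a*b))*(Real.sin_sq_add_cos_sq ξ)

lemma key1 (ha : 0 < a) (hb : 0 < b) (hba : b < a) (hq : 0 ≤ q) {ξ : ℝ}
    (hs : 0 ≤ Real.sin ξ) (hc : b < a*Real.cos ξ) :
    copg' a b ξ * coph a b q (copg a b ξ) = copF a b q ξ := by
  have hv := copv_pos ha hb hba.ne' ξ
  have hs0 : 0 < Real.sqrt (copv a b ξ) := Real.sqrt_pos.mpr hv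
  have hA : 0 < a - b*Real.cos ξ := by nlinarith [Real.cos_le_one ξ]
  have hB : 0 < a*Real.cos ξ - b := by linarith
  have hpa : (0:ℝ) < a^(2*q) := Real.rpow_pos_of_pos ha _
  have hpb : (0:ℝ) < b^(2*q) := Real.rpow_pos_of_pos hb _
  have hF : copF a b q ξ =
      Real.sin ξ^(2*q) / ((copv a b ξ)^q * Real.sqrt (copv a b ξ)) := by
    unfold copF
    rw [show a^2 + b^2 - 2*a*b*Real.cos ξ = copv a b ξ from rfl, copv_rpow ha hb hba]
  rw [hF]
  unfold coph
  rw [copg_rpow ha hb hba hq hs, sqrt_sub_copg_a ha hb hba ξ,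
    sqrt_sub_copg_b1 ha hb hba (by linarith : b ≤ a*Real.cos ξ)]
  unfold copg'
  rw [cop_factor]
  have hvq : (0:ℝ) < (copv a b ξ)^q := Real.rpow_pos_of_pos hv _
  have h2 : copv a b ξ = Real.sqrt (copv a b ξ)^2 := (Real.sq_sqrt hv.le).symm
  rw [h2]
  field_simp
  simp only [Real.sqrt_sq hs0.le]

end lemmas2

section lemmas3
variable {a b q : ℝ}

lemma key2 (ha : 0 < a) (hb : 0 < b) (hba : b < a) (hq : 0 ≤ q) {ξ : ℝ}
    (hs : 0 ≤ Real.sin ξ) (hc : a*Real.cos ξ < b) :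
    (-(copg' a b ξ)) * coph a b q (copg a b ξ) = copF a b q ξ := by
  have hv := copv_pos ha hb hba.ne' ξ
  have hs0 : 0 < Real.sqrt (copv a b ξ) := Real.sqrt_pos.mpr hv
  have hA : 0 < a - b*Real.cos ξ := by nlinarith [Real.cos_le_one ξ]
  have hB : 0 < b - a*Real.cos ξ := by linarith
  have hpa : (0:ℝ) < a^(2*q) := Real.rpow_pos_of_pos ha _
  have hpb : (0:ℝ) < b^(2*q) := Real.rpow_pos_of_pos hb _
  have hF : copF a b q ξ =
      Real.sin ξ^(2*q) / ((copv a b ξ)^q * Real.sqrt (copv a b ξ)) := by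
    unfold copF
    rw [show a^2 + b^2 - 2*a*b*Real.cos ξ = copv a b ξ from rfl, copv_rpow ha hb hba]
  rw [hF]
  unfold coph
  rw [copg_rpow ha hb hba hq hs, sqrt_sub_copg_a ha hb hba ξ,
    sqrt_sub_copg_b2 ha hb hba (by linarith : a*Real.cos ξ ≤ b)]
  unfold copg'
  rw [cop_factor]
  have hvq : (0:ℝ) < (copv a b ξ)^q := Real.rpow_pos_of_pos hv _
  have h2 : copv a b ξ = Real.sqrt (copv a b ξ)^2 := (Real.sq_sqrt hv.le).symm
  rw [h2]
  field_simp
  simp only [Real.sqrt_sq hs0.le]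
  ring

end lemmas3

section lemmas4
variable {a b q : ℝ}

lemma copv_cont : Continuous (copv a b) := by
  unfold copv; continuity

lemma copg_cont (ha : 0 < a) (hb : 0 < b) (hab : a ≠ b) : Continuous (copg a b) := by
  unfold copg
  exact (continuous_const.mul Real.continuous_sin).div (copv_cont.sqrt)
    (fun ξ => (Real.sqrt_pos.mpr (copv_pos ha hb hab ξ)).ne')

lemma copg'_cont (ha : 0 < a) (hb : 0 < b) (hab : a ≠ b) : Continuous (copg' a b) := by
  unfold copg'
  apply Continuous.div
  · exact continuous_const.mul ((Real.continuous_cos.mul copv_cont).sub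
      (continuous_const.mul (Real.continuous_sin.pow 2)))
  · exact copv_cont.mul copv_cont.sqrt
  · intro ξ
    have hv := copv_pos ha hb hab ξ
    positivity

lemma copF_cont (ha : 0 < a) (hb : 0 < b) (hab : a ≠ b) (hq : 0 ≤ q) :
    Continuous (copF a b q) := by
  unfold copF
  apply Continuous.div
  · exact (rpow_two_q_cont hq).comp Real.continuous_sin
  · refine continuous_iff_continuousAt.mpr fun ξ => ?_
    have hv := copv_pos ha hb hab ξ
    exact (Real.continuousAt_rpow_const _ _ (Or.inl (by unfold copv at hv; positivity))).comp
      (by fun_prop : Continuous fun ξ => a^2 + b^2 - 2*a*b*Real.cos ξ).continuousAt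
  · intro ξ
    have hv := copv_pos ha hb hab ξ
    unfold copv at hv
    exact (Real.rpow_pos_of_pos (by positivity) _).ne'

lemma copg_nonneg (ha : 0 < a) (hb : 0 < b) {ξ : ℝ} (hs : 0 ≤ Real.sin ξ) :
    0 ≤ copg a b ξ := by
  unfold copg
  positivity

lemma copg_le_b (ha : 0 < a) (hb : 0 < b) (hba : b < a) {ξ : ℝ} (hs : 0 ≤ Real.sin ξ) :
    copg a b ξ ≤ b := by
  have h := sq_sub_copg_b ha hb hba.ne' ξ
  have hv := copv_pos ha hb hba.ne' ξ
  have h0 : 0 ≤ copg a b ξ := copg_nonneg ha hb hs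
  nlinarith [sq_nonneg (b - a*Real.cos ξ), div_nonneg (mul_nonneg (sq_nonneg b) (sq_nonneg (b - a*Real.cos ξ))) hv.le]

lemma copg_zero : copg a b 0 = 0 := by unfold copg; simp

lemma copg_pi : copg a b π = 0 := by unfold copg; simp

end lemmas4

section lemmas5
variable {a b q : ℝ}

lemma copg_xi0 (ha : 0 < a) (hb : 0 < b) (hba : b < a) :
    copg a b (Real.arccos (b/a)) = b := by
  have h0 : 0 < b/a := by positivity
  have h1 : b/a < 1 := (div_lt_one ha).mpr hba
  have hcos : Real.cos (Real.arccos (b/a)) = b/a := Real.cos_arccos (by linarith) h1.le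
  have hsin : Real.sin (Real.arccos (b/a)) = Real.sqrt (1-(b/a)^2) := Real.sin_arccos _
  have hd : (0:ℝ) < a^2 - b^2 := by nlinarith
  unfold copg copv
  rw [hcos, hsin, show 1 - (b/a)^2 = (a^2-b^2)/a^2 by field_simp,
    show a^2+b^2-2*a*b*(b/a) = a^2-b^2 by field_simp; ring,
    Real.sqrt_div hd.le, Real.sqrt_sq ha.le]
  have : Real.sqrt (a^2-b^2) ≠ 0 := by positivity
  field_simp

lemma coph_contAt (ha : 0 < a) (hb : 0 < b) (hba : b < a) (hq : 0 ≤ q) {t : ℝ}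
    (h1 : t^2 < b^2) : ContinuousAt (coph a b q) t :=  by
  have h2 : t^2 < a^2 := by nlinarith
  have hsa : 0 < Real.sqrt (a^2 - t^2) := Real.sqrt_pos.mpr (by linarith)
  have hsb : 0 < Real.sqrt (b^2 - t^2) := Real.sqrt_pos.mpr (by linarith)
  have hpa : (0:ℝ) < a^(2*q) := Real.rpow_pos_of_pos ha _
  have hpb : (0:ℝ) < b^(2*q) := Real.rpow_pos_of_pos hb _
  unfold coph
  exact ((rpow_two_q_cont hq).continuousAt).div
    (by fun_prop : Continuous fun t : ℝ =>
      a^(2*q)*b^(2*q)*(Real.sqrt (a^2-t^2)*Real.sqrt (b^2-t^2))).continuousAt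
    (by positivity)

lemma coph_intble (ha : 0 < a) (hb : 0 < b) (hba : b < a) (hq : 0 ≤ q) :
    IntervalIntegrable (coph a b q) volume 0 b := by
  have hd : (0:ℝ) < a^2 - b^2 := by nlinarith
  have hpa : (0:ℝ) < a^(2*q) := Real.rpow_pos_of_pos ha _
  have hpb : (0:ℝ) < b^(2*q) := Real.rpow_pos_of_pos hb _
  set M : ℝ := b^(2*q) / (a^(2*q)*b^(2*q)*(Real.sqrt (a^2-b^2) * Real.sqrt b)) with hM
  have hM0 : 0 ≤ M := by positivity
  have hmaj : IntervalIntegrable (fun t => M * (b-t)^(-(1/2):ℝ)) volume 0 b := by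
    have h1 : IntervalIntegrable (fun x : ℝ => x ^ (-(1/2):ℝ)) volume 0 b :=
      intervalIntegral.intervalIntegrable_rpow' (by norm_num)
    have h2 := (h1.comp_sub_left b).symm
    simpa using h2.const_mul M
  refine hmaj.mono_fun' ?_ ?_
  · apply Measurable.aestronglyMeasurable
    apply Measurable.div
    · exact (rpow_two_q_cont hq).measurable
    · fun_prop
  · filter_upwards [ae_restrict_mem measurableSet_uIoc] with t ht
    rw [Set.uIoc_of_le hb.le] at ht
    rcases ht.2.eq_or_lt with heq | hlt
    · rw [heq]
      have h0 : coph a b q b = 0 := by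
        unfold coph; rw [sub_self, Real.sqrt_zero, mul_zero, mul_zero, div_zero]
      rw [h0, norm_zero, sub_self, Real.zero_rpow (by norm_num : (-(1/2):ℝ) ≠ 0), mul_zero]
    · have h0t : 0 < t := ht.1
      have hbt : 0 < b - t := by linarith
      have hnn : 0 ≤ coph a b q t := by
        unfold coph
        positivity
      have key : coph a b q t ≤
          b^(2*q)/(a^(2*q)*b^(2*q)*(Real.sqrt (a^2-b^2)*(Real.sqrt b*Real.sqrt (b-t)))) := by
        have h1 : Real.sqrt (a^2-b^2) ≤ Real.sqrt (a^2-t^2) := Real.sqrt_le_sqrt (by nlinarith)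
        have h2 : Real.sqrt b*Real.sqrt (b-t) ≤ Real.sqrt (b^2-t^2) := by
          rw [← Real.sqrt_mul hb.le]
          exact Real.sqrt_le_sqrt (by nlinarith)
        have h3 : t^(2*q) ≤ b^(2*q) := Real.rpow_le_rpow h0t.le hlt.le (by positivity)
        unfold coph
        gcongr
      have e1 : M * (b-t)^(-(1/2):ℝ) =
          b^(2*q)/(a^(2*q)*b^(2*q)*(Real.sqrt (a^2-b^2)*(Real.sqrt b*Real.sqrt (b-t)))) := by
        rw [Real.rpow_neg hbt.le, ← Real.sqrt_eq_rpow, hM]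
        have s1 : Real.sqrt (b-t) ≠ 0 := by positivity
        have s2 : Real.sqrt (a^2-b^2) ≠ 0 := by positivity
        have s3 : Real.sqrt b ≠ 0 := by positivity
        rw [div_mul_eq_div_div]
        rw [div_div]
        ring_nf
      rw [Real.norm_eq_abs, abs_of_nonneg hnn, e1]
      exact key

end lemmas5

section pieces
variable {a b q : ℝ}

lemma substep1 (ha : 0 < a) (hb : 0 < b) (hba : b < a) (hq : 0 ≤ q) {c : ℝ}
    (hc0 : 0 ≤ c) (hc : c < Real.arccos (b/a)) :
    ∫ ξ in (0:ℝ)..c, copF a b q ξ = ∫ t in (0:ℝ)..(copg a b c), coph a b q t := by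
  have hone : b/a < 1 := (div_lt_one ha).mpr hba
  have hπ2 : Real.arccos (b/a) < π/2 := Real.arccos_lt_pi_div_two.mpr (by positivity)
  have hcπ : c ≤ π := by linarith [Real.pi_pos]
  have hca : Real.cos (Real.arccos (b/a)) = b/a :=
    Real.cos_arccos (by nlinarith [div_pos hb ha]) hone.le
  have hcosc : b/a < Real.cos c := by
    rw [← hca]
    exact Real.cos_lt_cos_of_nonneg_of_le_pi hc0 (Real.arccos_le_pi _) hc
  have huIcc : Set.uIcc (0:ℝ) c = Set.Icc 0 c := Set.uIcc_of_le hc0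
  have hkey : ∀ ξ ∈ Set.Icc (0:ℝ) c, b < a*Real.cos ξ := by
    intro ξ hξ
    have h1 : Real.cos c ≤ Real.cos ξ :=
      Real.cos_le_cos_of_nonneg_of_le_pi hξ.1 hcπ hξ.2
    have : b/a < Real.cos ξ := lt_of_lt_of_le hcosc h1
    calc b = a * (b/a) := by field_simp
    _ < a * Real.cos ξ := by exact (mul_lt_mul_iff_right₀ ha).mpr this
  have hsin : ∀ ξ ∈ Set.Icc (0:ℝ) c, 0 ≤ Real.sin ξ := fun ξ hξ =>
    Real.sin_nonneg_of_nonneg_of_le_pi hξ.1 (hξ.2.trans hcπ)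
  have hder : ∀ x ∈ Set.uIcc (0:ℝ) c, HasDerivAt (copg a b) (copg' a b x) x :=
    fun x _ => copg_hasDerivAt ha hb hba.ne' x
  have h' : ContinuousOn (copg' a b) (Set.uIcc (0:ℝ) c) :=
    (copg'_cont ha hb hba.ne').continuousOn
  have hg : ContinuousOn (coph a b q) (copg a b '' Set.uIcc (0:ℝ) c) := by
    intro t ht
    obtain ⟨ξ, hξ, rfl⟩ := ht
    rw [huIcc] at hξ
    have hB : b < a*Real.cos ξ := hkey ξ hξ
    have hBne : b - a*Real.cos ξ ≠ 0 := by linarith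
    have hvp := copv_pos ha hb hba.ne' ξ
    have hlt : (copg a b ξ)^2 < b^2 := by
      have h2 := sq_sub_copg_b ha hb hba.ne' ξ
      nlinarith [div_pos (by positivity : (0:ℝ) < b^2*(b - a*Real.cos ξ)^2) hvp]
    exact (coph_contAt ha hb hba hq hlt).continuousWithinAt
  have hsub := intervalIntegral.integral_comp_smul_deriv' hder h' hg
  rw [copg_zero] at hsub
  rw [← hsub]
  apply intervalIntegral.integral_congr
  intro ξ hξ
  rw [huIcc] at hξ
  have := key1 ha hb hba hq (hsin ξ hξ) (hkey ξ hξ)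
  simpa [smul_eq_mul] using this.symm

lemma piece1 (ha : 0 < a) (hb : 0 < b) (hba : b < a) (hq : 0 ≤ q) :
    ∫ ξ in (0:ℝ)..Real.arccos (b/a), copF a b q ξ = ∫ t in (0:ℝ)..b, coph a b q t := by
  set ξ₀ := Real.arccos (b/a) with hξ₀
  have hone : b/a < 1 := (div_lt_one ha).mpr hba
  have hξ0pos : 0 < ξ₀ := Real.arccos_pos.mpr hone
  have hπ2 : ξ₀ < π/2 := Real.arccos_lt_pi_div_two.mpr (by positivity)
  have hQ : Continuous fun c => ∫ ξ in (0:ℝ)..c, copF a b q ξ :=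
    intervalIntegral.continuous_primitive
      (fun u v => (copF_cont ha hb hba.ne' hq).intervalIntegrable u v) 0
  have hP : ContinuousOn (fun t => ∫ s in (0:ℝ)..t, coph a b q s) (Set.uIcc (0:ℝ) b) :=
    intervalIntegral.continuousOn_primitive_interval' (coph_intble ha hb hba hq)
      Set.left_mem_uIcc
  have h1 : Filter.Tendsto (fun c => ∫ ξ in (0:ℝ)..c, copF a b q ξ) (nhdsWithin ξ₀ (Set.Iio ξ₀))
      (nhds (∫ ξ in (0:ℝ)..ξ₀, copF a b q ξ)) :=
    (hQ.tendsto ξ₀).mono_left nhdsWithin_le_nhds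
  have hIoo : Set.Ioo 0 ξ₀ ∈ nhdsWithin ξ₀ (Set.Iio ξ₀) :=
    Ioo_mem_nhdsLT_of_mem ⟨hξ0pos, le_refl _⟩
  have hgt : Filter.Tendsto (copg a b) (nhdsWithin ξ₀ (Set.Iio ξ₀))
      (nhdsWithin b (Set.uIcc (0:ℝ) b)) := by
    apply tendsto_nhdsWithin_of_tendsto_nhds_of_eventually_within
    · have := ((copg_cont ha hb hba.ne').tendsto ξ₀).mono_left
        (nhdsWithin_le_nhds (s := Set.Iio ξ₀))
      rwa [copg_xi0 ha hb hba] at this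
    · filter_upwards [hIoo] with c hc
      have hsin : 0 ≤ Real.sin c := Real.sin_nonneg_of_nonneg_of_le_pi hc.1.le
        (by linarith [hc.2, Real.pi_pos])
      rw [Set.uIcc_of_le hb.le]
      exact ⟨copg_nonneg ha hb hsin, copg_le_b ha hb hba hsin⟩
  have h2 : Filter.Tendsto (fun c => ∫ s in (0:ℝ)..(copg a b c), coph a b q s)
      (nhdsWithin ξ₀ (Set.Iio ξ₀)) (nhds (∫ s in (0:ℝ)..b, coph a b q s)) :=
    ((hP b (by rw [Set.uIcc_of_le hb.le]; exact ⟨hb.le, le_refl _⟩)).tendsto).comp hgt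
  refine tendsto_nhds_unique_of_eventuallyEq h1 h2 ?_
  filter_upwards [hIoo] with c hc
  exact substep1 ha hb hba hq hc.1.le hc.2

end pieces

section pieces2
variable {a b q : ℝ}

lemma substep2 (ha : 0 < a) (hb : 0 < b) (hba : b < a) (hq : 0 ≤ q) {c : ℝ}
    (hc0 : Real.arccos (b/a) < c) (hc : c ≤ π) :
    ∫ ξ in c..π, copF a b q ξ = ∫ t in (0:ℝ)..(copg a b c), coph a b q t := by
  have hone : b/a < 1 := (div_lt_one ha).mpr hba
  have hca : Real.cos (Real.arccos (b/a)) = b/a :=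
    Real.cos_arccos (by nlinarith [div_pos hb ha]) hone.le
  have hc0' : (0:ℝ) ≤ c := (Real.arccos_nonneg _).trans hc0.le
  have hcosc : Real.cos c < b/a := by
    rw [← hca]
    exact Real.cos_lt_cos_of_nonneg_of_le_pi (Real.arccos_nonneg _) hc hc0
  have huIcc : Set.uIcc c π = Set.Icc c π := Set.uIcc_of_le hc
  have hkey : ∀ ξ ∈ Set.Icc c π, a*Real.cos ξ < b := by
    intro ξ hξ
    have h1 : Real.cos ξ ≤ Real.cos c :=
      Real.cos_le_cos_of_nonneg_of_le_pi hc0' hξ.2 hξ.1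
    have h2 : Real.cos ξ < b/a := lt_of_le_of_lt h1 hcosc
    calc a * Real.cos ξ < a * (b/a) := (mul_lt_mul_iff_right₀ ha).mpr h2
    _ = b := by field_simp
  have hsin : ∀ ξ ∈ Set.Icc c π, 0 ≤ Real.sin ξ := fun ξ hξ =>
    Real.sin_nonneg_of_nonneg_of_le_pi (hc0'.trans hξ.1) hξ.2
  have hder : ∀ x ∈ Set.uIcc c π, HasDerivAt (copg a b) (copg' a b x) x :=
    fun x _ => copg_hasDerivAt ha hb hba.ne' x
  have h' : ContinuousOn (copg' a b) (Set.uIcc c π) :=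
    (copg'_cont ha hb hba.ne').continuousOn
  have hg : ContinuousOn (coph a b q) (copg a b '' Set.uIcc c π) := by
    intro t ht
    obtain ⟨ξ, hξ, rfl⟩ := ht
    rw [huIcc] at hξ
    have hB : a*Real.cos ξ < b := hkey ξ hξ
    have hBne : b - a*Real.cos ξ ≠ 0 := by linarith
    have hvp := copv_pos ha hb hba.ne' ξ
    have hlt : (copg a b ξ)^2 < b^2 := by
      have h2 := sq_sub_copg_b ha hb hba.ne' ξ
      nlinarith [div_pos (by positivity : (0:ℝ) < b^2*(b - a*Real.cos ξ)^2) hvp]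
    exact (coph_contAt ha hb hba hq hlt).continuousWithinAt
  have hsub := intervalIntegral.integral_comp_smul_deriv' hder h' hg
  rw [copg_pi] at hsub
  have heq : ∫ ξ in c..π, copF a b q ξ
      = ∫ ξ in c..π, (-(copg' a b ξ)) * coph a b q (copg a b ξ) := by
    apply intervalIntegral.integral_congr
    intro ξ hξ
    rw [huIcc] at hξ
    exact (key2 ha hb hba hq (hsin ξ hξ) (hkey ξ hξ)).symm
  rw [heq]
  have : ∫ ξ in c..π, (-(copg' a b ξ)) * coph a b q (copg a b ξ)
      = -∫ ξ in c..π, copg' a b ξ • (coph a b q ∘ copg a b) ξ := by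
    rw [← intervalIntegral.integral_neg]
    apply intervalIntegral.integral_congr
    intro ξ _
    simp [smul_eq_mul]
  rw [this, hsub, ← intervalIntegral.integral_symm]

lemma piece2 (ha : 0 < a) (hb : 0 < b) (hba : b < a) (hq : 0 ≤ q) :
    ∫ ξ in Real.arccos (b/a)..π, copF a b q ξ = ∫ t in (0:ℝ)..b, coph a b q t := by
  set ξ₀ := Real.arccos (b/a) with hξ₀
  have hone : b/a < 1 := (div_lt_one ha).mpr hba
  have hξ0pos : 0 < ξ₀ := Real.arccos_pos.mpr hone
  have hπ2 : ξ₀ < π/2 := Real.arccos_lt_pi_div_two.mpr (by positivity)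
  have hξπ : ξ₀ < π := by linarith [Real.pi_pos]
  have hint : ∀ u v : ℝ, IntervalIntegrable (copF a b q) volume u v :=
    fun u v => (copF_cont ha hb hba.ne' hq).intervalIntegrable u v
  have hQ : Continuous fun c => ∫ ξ in (0:ℝ)..c, copF a b q ξ :=
    intervalIntegral.continuous_primitive (fun u v => hint u v) 0
  have hR : ∀ c : ℝ, ∫ ξ in c..π, copF a b q ξ
      = (∫ ξ in (0:ℝ)..π, copF a b q ξ) - ∫ ξ in (0:ℝ)..c, copF a b q ξ := by
    intro c
    rw [← intervalIntegral.integral_add_adjacent_intervals (hint 0 c) (hint c π)]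
    ring
  have hP : ContinuousOn (fun t => ∫ s in (0:ℝ)..t, coph a b q s) (Set.uIcc (0:ℝ) b) :=
    intervalIntegral.continuousOn_primitive_interval' (coph_intble ha hb hba hq)
      Set.left_mem_uIcc
  have h1 : Filter.Tendsto (fun c => ∫ ξ in c..π, copF a b q ξ) (nhdsWithin ξ₀ (Set.Ioi ξ₀))
      (nhds (∫ ξ in ξ₀..π, copF a b q ξ)) := by
    rw [hR ξ₀]
    exact (tendsto_const_nhds.sub ((hQ.tendsto ξ₀).mono_left nhdsWithin_le_nhds)).congr
      (fun c => (hR c).symm)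
  have hIoo : Set.Ioo ξ₀ π ∈ nhdsWithin ξ₀ (Set.Ioi ξ₀) :=
    Ioo_mem_nhdsGT_of_mem ⟨le_refl _, hξπ⟩
  have hgt : Filter.Tendsto (copg a b) (nhdsWithin ξ₀ (Set.Ioi ξ₀))
      (nhdsWithin b (Set.uIcc (0:ℝ) b)) := by
    apply tendsto_nhdsWithin_of_tendsto_nhds_of_eventually_within
    · have := ((copg_cont ha hb hba.ne').tendsto ξ₀).mono_left
        (nhdsWithin_le_nhds (s := Set.Ioi ξ₀))
      rwa [copg_xi0 ha hb hba] at this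
    · filter_upwards [hIoo] with c hc
      have hsin : 0 ≤ Real.sin c := Real.sin_nonneg_of_nonneg_of_le_pi
        (hξ0pos.le.trans hc.1.le) hc.2.le
      rw [Set.uIcc_of_le hb.le]
      exact ⟨copg_nonneg ha hb hsin, copg_le_b ha hb hba hsin⟩
  have h2 : Filter.Tendsto (fun c => ∫ s in (0:ℝ)..(copg a b c), coph a b q s)
      (nhdsWithin ξ₀ (Set.Ioi ξ₀)) (nhds (∫ s in (0:ℝ)..b, coph a b q s)) :=
    ((hP b (by rw [Set.uIcc_of_le hb.le]; exact ⟨hb.le, le_refl _⟩)).tendsto).comp hgt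
  refine tendsto_nhds_unique_of_eventuallyEq h1 h2 ?_
  filter_upwards [hIoo] with c hc
  exact substep2 ha hb hba hq hc.1 hc.2.le

end pieces2

lemma copson_aux {a b q : ℝ} (ha : 0 < a) (hb : 0 < b) (hba : b < a) (hq : 0 ≤ q) :
    (∫ ξ in (0:ℝ)..π, Real.sin ξ ^ (2*q) / (a^2 + b^2 - 2*a*b*Real.cos ξ) ^ (q + 1/2))
      = 2 / (a ^ (2*q) * b ^ (2*q)) *
        ∫ t in (0:ℝ)..b, t ^ (2*q) / (Real.sqrt (a^2 - t^2) * Real.sqrt (b^2 - t^2)) := by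
  have hint : ∀ u v : ℝ, IntervalIntegrable (copF a b q) volume u v :=
    fun u v => (copF_cont ha hb hba.ne' hq).intervalIntegrable u v
  have hC : (0:ℝ) < a^(2*q) * b^(2*q) :=
    mul_pos (Real.rpow_pos_of_pos ha _) (Real.rpow_pos_of_pos hb _)
  have hsplit : (∫ ξ in (0:ℝ)..π, copF a b q ξ)
      = (∫ ξ in (0:ℝ)..Real.arccos (b/a), copF a b q ξ)
        + ∫ ξ in Real.arccos (b/a)..π, copF a b q ξ :=
    (intervalIntegral.integral_add_adjacent_intervals (hint _ _) (hint _ _)).symm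
  have hcoph : (∫ t in (0:ℝ)..b, coph a b q t)
      = (1/(a^(2*q) * b^(2*q))) *
        ∫ t in (0:ℝ)..b, t ^ (2*q) / (Real.sqrt (a^2 - t^2) * Real.sqrt (b^2 - t^2)) := by
    rw [← intervalIntegral.integral_const_mul]
    apply intervalIntegral.integral_congr
    intro t _
    unfold coph
    show _ = 1 / (a ^ (2*q) * b ^ (2*q)) * (t ^ (2*q) / (Real.sqrt (a^2 - t^2) * Real.sqrt (b^2 - t^2)))
    rw [div_mul_div_comm, one_mul]
  show (∫ ξ in (0:ℝ)..π, copF a b q ξ) = _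
  rw [hsplit, piece1 ha hb hba hq, piece2 ha hb hba hq, hcoph]
  ring

/-- Lemma (generalized Copson identity): for positive reals `a ≠ b` and `q ≥ 0`,
`∫₀^π sin^{2q} ξ / (a² + b² − 2ab cos ξ)^{q+1/2} dξ
  = (2 / (a^{2q} b^{2q})) ∫₀^{min(a,b)} t^{2q} / (√(a²−t²) √(b²−t²)) dt`. -/
theorem copson_general (a b q : ℝ) (ha : 0 < a) (hb : 0 < b) (hab : a ≠ b) (hq : 0 ≤ q) :
    (∫ ξ in (0:ℝ)..π, Real.sin ξ ^ (2*q) / (a^2 + b^2 - 2*a*b*Real.cos ξ) ^ (q + 1/2))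
      = 2 / (a ^ (2*q) * b ^ (2*q)) *
        ∫ t in (0:ℝ)..min a b, t ^ (2*q) / (Real.sqrt (a^2 - t^2) * Real.sqrt (b^2 - t^2)) := by
  rcases lt_or_gt_of_ne hab with h | h
  · -- a < b
    rw [min_eq_left h.le]
    have := copson_aux hb ha h hq
    have hL : (∫ ξ in (0:ℝ)..π, Real.sin ξ ^ (2*q) / (b^2 + a^2 - 2*b*a*Real.cos ξ) ^ (q + 1/2))
        = ∫ ξ in (0:ℝ)..π, Real.sin ξ ^ (2*q) / (a^2 + b^2 - 2*a*b*Real.cos ξ) ^ (q + 1/2) := by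
      apply intervalIntegral.integral_congr
      intro ξ _
      ring_nf
    have hRi : (∫ t in (0:ℝ)..a, t ^ (2*q) / (Real.sqrt (b^2 - t^2) * Real.sqrt (a^2 - t^2)))
        = ∫ t in (0:ℝ)..a, t ^ (2*q) / (Real.sqrt (a^2 - t^2) * Real.sqrt (b^2 - t^2)) := by
      apply intervalIntegral.integral_congr
      intro t _
      simp only []
      rw [mul_comm (Real.sqrt (b^2 - t^2))]
    rw [hL, hRi, mul_comm (b ^ (2*q))] at this
    exact this
  · rw [min_eq_right h.le]
    exact copson_aux ha hb h hq
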